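/- Let T(t,s) be the evolution family of x' = A(t)x and φ the solution operator of x' = A(t)x + f(t,x); set A_n := T(n+1,n) and f_n(x) := φ(n+1,n;x) − A_n x. Suppose maps h_n : ℝ^d → ℝ^d (n ∈ ℤ) satisfy the conjugacy equations h_{n+1}(A_n x + f_n(x)) = A_n h_n(x) for all n ∈ ℤ and x ∈ ℝ^d. Define H : ℝ × ℝ^d → ℝ^d by H(t,x) := T(t,n)h_n(φ(n,t;x)) for t ∈ [n,n+1) and n ∈ ℤ. Then H(t, φ(t,s;y)) = T(t,s)H(s,y) for all t,s ∈ ℝ and y ∈ ℝ^d; in particular, for every solution x(·) of x' = A(t)x + f(t,x), the function t ↦ H(t,x(t)) is a solution of x' = A(t)x. -/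

import Mathlib

/- STATEMENT 18: If the maps h_n conjugate the time-one maps of the nonlinear
equation to the linear ones, then H(t,x) := T(t,n) h_n(φ(n,t;x)) for t ∈ [n,n+1)
intertwines the nonlinear evolution with the linear evolution: H(t,φ(t,s;y)) =
T(t,s) H(s,y); in particular H maps solutions of x' = A(t)x + f(t,x) to solutions
of x' = A(t)x. -/

noncomputable section

/-- `ℝ^d` -/
abbrev Ed (d : ℕ) := Fin d → ℝ

theorem conjugacy_transport (d : ℕ)
    -- the linear equation x' = A(t)x and its evolution family T(t,s)
    (A : ℝ → Ed d →L[ℝ] Ed d) (T : ℝ → ℝ → Ed d →L[ℝ] Ed d)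
    (hT_id : ∀ t, T t t = ContinuousLinearMap.id ℝ (Ed d))
    (hT_comp : ∀ t s r, (T t s).comp (T s r) = T t r)
    (hT_deriv : ∀ s x t, HasDerivAt (fun τ => T τ s x) (A t (T t s x)) t)
    -- the nonlinear perturbation f and the solution operator φ of x' = A(t)x + f(t,x)
    (f : ℝ → Ed d → Ed d)
    (hf_cont : Continuous (fun p : ℝ × Ed d => f p.1 p.2))
    (φ : ℝ → ℝ → Ed d → Ed d)
    (hφ_init : ∀ t₀ x, φ t₀ t₀ x = x)
    (hφ_sol : ∀ t₀ x t, HasDerivAt (fun τ => φ τ t₀ x) (A t (φ t t₀ x) + f t (φ t t₀ x)) t)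
    (hφ_cocycle : ∀ t r s x, φ t r (φ r s x) = φ t s x)
    -- uniqueness of solutions: every solution is given by φ
    (huniq : ∀ x : ℝ → Ed d, (∀ τ, HasDerivAt x (A τ (x τ) + f τ (x τ)) τ) →
      ∀ t s : ℝ, x t = φ t s (x s))
    -- the maps h_n and the conjugacy equations
    -- h_{n+1}(A_n x + f_n(x)) = A_n h_n(x), where A_n x + f_n(x) = φ(n+1,n;x)
    (h : ℤ → Ed d → Ed d)
    (hconj : ∀ (n : ℤ) (x : Ed d),
      h (n + 1) (φ ((n : ℝ) + 1) (n : ℝ) x) = T ((n : ℝ) + 1) (n : ℝ) (h n x))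
    -- the map H(t,x) = T(t,n) h_n(φ(n,t;x)) for t ∈ [n, n+1)
    (H : ℝ → Ed d → Ed d)
    (hH : ∀ (n : ℤ) (t : ℝ), t ∈ Set.Ico (n : ℝ) ((n : ℝ) + 1) →
      ∀ x : Ed d, H t x = T t (n : ℝ) (h n (φ (n : ℝ) t x))) :
    -- then H(t, φ(t,s;y)) = T(t,s) H(s,y) for all t, s, y, ...
    (∀ (t s : ℝ) (y : Ed d), H t (φ t s y) = T t s (H s y)) ∧
    -- ... and in particular H maps solutions of the nonlinear equation
    -- to solutions of the linear one
    (∀ x : ℝ → Ed d, (∀ τ, HasDerivAt x (A τ (x τ) + f τ (x τ)) τ) →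
      ∀ t, HasDerivAt (fun τ => H τ (x τ)) (A t (H t (x t))) t) := by

  have Tapp : ∀ t s r (v : Ed d), T t s (T s r v) = T t r v := by
    intro t s r v
    rw [← hT_comp t s r]; rfl
  have Tid : ∀ t (v : Ed d), T t t v = v := by
    intro t v; rw [hT_id]; rfl
  -- integer conjugacy for all pairs of integers
  have key : ∀ (k : ℤ) (m : ℤ) (x : Ed d),
      h (m + k) (φ ((m : ℝ) + (k : ℝ)) (m : ℝ) x) = T ((m : ℝ) + (k : ℝ)) (m : ℝ) (h m x) := by
    intro k
    induction k using Int.induction_on with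
    | zero => intro m x; simpa [hφ_init] using (Tid (m : ℝ) (h m x)).symm
    | succ k ih =>
      intro m x
      have ih' := ih m x
      have h1 := hconj (m + k) (φ ((m : ℝ) + (k : ℝ)) (m : ℝ) x)
      push_cast at ih' h1 ⊢
      rw [hφ_cocycle] at h1
      rw [show m + ((k : ℤ) + 1) = m + k + 1 from by ring,
        show (m : ℝ) + ((k : ℝ) + 1) = (m : ℝ) + (k : ℝ) + 1 from by ring, h1, ih', Tapp]
    | pred k ih =>
      intro m x
      have ih' := ih m x
      have h1 := hconj (m - (k + 1)) (φ ((m : ℝ) - ((k : ℝ) + 1)) (m : ℝ) x)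
      push_cast at ih' h1 ⊢
      rw [hφ_cocycle] at h1
      rw [show (m : ℝ) - ((k : ℝ) + 1) + 1 = (m : ℝ) + -(k : ℝ) from by ring,
        show m - ((k : ℤ) + 1) + 1 = m + -(k : ℤ) from by ring, ih'] at h1
      have h4 := congrArg (T ((m : ℝ) - ((k : ℝ) + 1)) ((m : ℝ) + -(k : ℝ))) h1
      rw [Tapp, Tapp, Tid] at h4
      rw [show m + (-(k : ℤ) - 1) = m - (k + 1) from by ring,
        show (m : ℝ) + (-(k : ℝ) - 1) = (m : ℝ) - ((k : ℝ) + 1) from by ring]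
      exact h4.symm
  have part1 : ∀ (t s : ℝ) (y : Ed d), H t (φ t s y) = T t s (H s y) := by
    intro t s y
    set n : ℤ := ⌊t⌋ with hn
    set m : ℤ := ⌊s⌋ with hm
    have htI : t ∈ Set.Ico (n : ℝ) ((n : ℝ) + 1) := ⟨Int.floor_le t, Int.lt_floor_add_one t⟩
    have hsI : s ∈ Set.Ico (m : ℝ) ((m : ℝ) + 1) := ⟨Int.floor_le s, Int.lt_floor_add_one s⟩
    rw [hH n t htI, hH m s hsI, hφ_cocycle]
    have hk := key (n - m) m (φ (m : ℝ) s y)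
    have hc1 : m + (n - m) = n := by ring
    have hc2 : (m : ℝ) + ((n - m : ℤ) : ℝ) = (n : ℝ) := by push_cast; ring
    rw [hc1, hc2, hφ_cocycle] at hk
    rw [show φ (n : ℝ) s y = φ (n : ℝ) s y from rfl]
    have : h n (φ (n : ℝ) s y) = T (n : ℝ) (m : ℝ) (h m (φ (m : ℝ) s y)) := hk
    rw [this, Tapp, ← Tapp t s (m : ℝ)]
  refine ⟨part1, ?_⟩
  intro x hx t
  have heq : (fun τ => H τ (x τ)) = fun τ => T τ t (H t (x t)) := by
    funext τ
    rw [huniq x hx τ t, part1]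
  rw [heq]
  have hd := hT_deriv t (H t (x t)) t
  rwa [Tid] at hd

end
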